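/- Let U₁, U₂ ∈ C²(𝕋^d) satisfy ΔU_i = e^{V_i + U_i} − 1 on 𝕋^d, where V₁, V₂ ∈ C(𝕋^d) with ‖V_i‖_{L^∞} ≤ K. Then ‖∇U₁ − ∇U₂‖²_{L²(𝕋^d)} ≤ e^{C(K)} ‖V₁ − V₂‖²_{L²(𝕋^d)} for a constant C(K) depending only on K and d; in fact one can take the bound ∫|∇(U₁−U₂)|² ≤ ∫ e^{V₁+U₁}(V₂ − V₁)(U₂ − U₁) ≤ e^{K + sup U₁} ‖V₁−V₂‖_{L²} ‖U₁−U₂‖_{L²}, combined with a Poincaré-type control of ‖U₁−U₂‖_{L²} by ‖∇(U₁−U₂)‖_{L²} plus the mean, where the mean is controlled using the monotonicity of the exponential. -/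

import Mathlib

open MeasureTheory Set

section VPMEAux

variable {d n : ℕ}

local notation "Ed" => EuclideanSpace ℝ (Fin d)
local notation "En" => EuclideanSpace ℝ (Fin (n+1))
local notation "Pn" => (Fin (n+1) → ℝ)

lemma secondDeriv_nonpos_of_max {g : ℝ → ℝ} (hg : ContDiff ℝ 2 g)
    (hmax : ∀ t, g t ≤ g 0) : deriv (deriv g) 0 ≤ 0 := by
  by_contra h
  push_neg at h
  have hdg : ContDiff ℝ 1 (deriv g) := by
    have := hg.fderiv_right (m := 1) (by norm_num)
    exact (this.clm_apply contDiff_const :)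
  have hd0 : deriv g 0 = 0 := by
    have : IsLocalMax g 0 := (isMaxOn_univ_iff.2 hmax).isLocalMax Filter.univ_mem
    exact this.deriv_eq_zero
  have h2 : HasDerivAt (deriv g) (deriv (deriv g) 0) 0 :=
    ((hdg.differentiable one_ne_zero) 0).hasDerivAt
  rw [hasDerivAt_iff_tendsto_slope] at h2
  have h3 : ∀ᶠ t in nhdsWithin (0:ℝ) (Set.Ioi 0), 0 < slope (deriv g) 0 t := by
    have := h2.mono_left (nhdsWithin_mono 0 (by intro t ht; exact ne_of_gt ht))
    exact this.eventually (eventually_gt_nhds h)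
  rw [Filter.eventually_iff, mem_nhdsGT_iff_exists_Ioo_subset] at h3
  obtain ⟨u, hu, hsub⟩ := h3
  replace hu : (0:ℝ) < u := hu
  have hmono : StrictMonoOn g (Icc 0 u) := by
    apply strictMonoOn_of_deriv_pos (convex_Icc 0 u) (hg.continuous.continuousOn)
    intro t ht
    rw [interior_Icc] at ht
    have hs := hsub ht
    simp only [mem_setOf_eq, slope_def_field, hd0] at hs
    have ht0 : 0 < t := ht.1
    have := mul_pos hs (sub_pos.2 ht0 : (0:ℝ) < t - 0)
    rw [div_mul_cancel₀] at this
    · linarith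
    · exact ne_of_gt (by linarith)
  have : g 0 < g u := hmono (by simp [le_of_lt hu]) (by simp [le_of_lt hu, le_refl]) hu
  exact absurd (hmax u) (not_le.2 this)


lemma line_hasDerivAt (x₀ v : Ed) (t : ℝ) :
    HasDerivAt (fun s : ℝ => x₀ + s • v) v t := by
  simpa using ((hasDerivAt_id t).smul_const v).const_add x₀

lemma deriv_line {U : Ed → ℝ} (hU : ContDiff ℝ 2 U) (x₀ v : Ed) :
    deriv (fun t : ℝ => U (x₀ + t • v)) = fun t => fderiv ℝ U (x₀ + t • v) v := by
  funext t
  exact (((hU.differentiable (by norm_num)) _).hasFDerivAt.comp_hasDerivAt t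
    (line_hasDerivAt x₀ v t)).deriv

lemma secondDirDeriv_eq {U : Ed → ℝ} (hU : ContDiff ℝ 2 U) (x₀ v : Ed) :
    deriv (deriv (fun t : ℝ => U (x₀ + t • v))) 0
      = fderiv ℝ (fun z => fderiv ℝ U z v) x₀ v := by
  rw [deriv_line hU x₀ v]
  have hG : ContDiff ℝ 1 (fun z => fderiv ℝ U z v) :=
    (hU.fderiv_right (m := 1) (by norm_num)).clm_apply contDiff_const
  have := (((hG.differentiable one_ne_zero) (x₀ + (0:ℝ) • v)).hasFDerivAt.comp_hasDerivAt 0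
    (line_hasDerivAt x₀ v 0)).deriv
  simpa [Function.comp_def] using this

lemma line_contDiff {U : Ed → ℝ} (hU : ContDiff ℝ 2 U) (x₀ v : Ed) :
    ContDiff ℝ 2 (fun t : ℝ => U (x₀ + t • v)) :=
  hU.comp (contDiff_const.add (contDiff_id.smul contDiff_const))


lemma periodic_intmul {f : Ed → ℝ}
    (hper : ∀ x (k : Fin d), f (x + EuclideanSpace.single k 1) = f x)
    (k : Fin d) (m : ℤ) (x : Ed) :
    f (x + (m : ℝ) • EuclideanSpace.single k 1) = f x := by
  induction m using Int.induction_on with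
  | zero => simp
  | succ m ih =>
      have e : x + ((m + 1 : ℤ) : ℝ) • EuclideanSpace.single k 1
          = (x + ((m : ℤ) : ℝ) • EuclideanSpace.single k 1) + EuclideanSpace.single k 1 := by
        push_cast; rw [add_smul]; module
      rw [e, hper]; exact ih
  | pred m ih =>
      have e : (x + ((-m - 1 : ℤ) : ℝ) • EuclideanSpace.single k 1) + EuclideanSpace.single k 1
          = x + ((-m : ℤ) : ℝ) • EuclideanSpace.single k 1 := by
        push_cast; rw [sub_smul, neg_smul]; module
      rw [← hper _ k, e]; exact ih

lemma periodic_intsum {f : Ed → ℝ}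
    (hper : ∀ x (k : Fin d), f (x + EuclideanSpace.single k 1) = f x)
    (c : Fin d → ℤ) (x : Ed) :
    f (x + ∑ k, (c k : ℝ) • EuclideanSpace.single k 1) = f x := by
  classical
  have H : ∀ s : Finset (Fin d), ∀ x : Ed,
      f (x + ∑ k ∈ s, (c k : ℝ) • EuclideanSpace.single k 1) = f x := by
    intro s
    induction s using Finset.induction_on with
    | empty => simp
    | @insert a s' hns ih =>
        intro x
        rw [Finset.sum_insert hns, ← add_assoc, ih]
        exact periodic_intmul hper a (c a) x
  exact H Finset.univ x

lemma isCompact_IccBox : IsCompact {x : Ed | ∀ i, x i ∈ Icc (0:ℝ) 1} := by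
  have h : {x : Ed | ∀ i, x i ∈ Icc (0:ℝ) 1}
      = (EuclideanSpace.equiv (Fin d) ℝ).toHomeomorph ⁻¹' (Set.pi univ fun _ => Icc (0:ℝ) 1) := by
  -- equiv is identity on points
    ext x
    constructor
    · intro hx i _; exact hx i
    · intro hx i; exact hx i (mem_univ i)
  rw [h, Homeomorph.isCompact_preimage]
  exact isCompact_univ_pi fun _ => isCompact_Icc

lemma exists_max_of_periodic {f : Ed → ℝ} (hf : Continuous f)
    (hper : ∀ x (k : Fin d), f (x + EuclideanSpace.single k 1) = f x) :
    ∃ x₀ : Ed, ∀ x, f x ≤ f x₀ := by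
  obtain ⟨x₀, _, hmax⟩ := isCompact_IccBox.exists_isMaxOn
    ⟨0, fun i => by rw [show (0:Ed) i = 0 from rfl]; exact ⟨le_refl 0, zero_le_one⟩⟩
    hf.continuousOn
  refine ⟨x₀, fun x => ?_⟩
  classical
  set c : Fin d → ℤ := fun k => ⌊x k⌋ with hc
  set y : Ed := x - ∑ k, (c k : ℝ) • EuclideanSpace.single k 1 with hy
  have hsum : ∀ j, (∑ k, (c k : ℝ) • EuclideanSpace.single k (1:ℝ)) j = (c j : ℝ) := by
    intro j
    have : (∑ k, (c k : ℝ) • EuclideanSpace.single k (1:ℝ)) j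
        = ∑ k, ((c k : ℝ) • EuclideanSpace.single k (1:ℝ)) j := by
      rw [WithLp.ofLp_sum, Finset.sum_apply]
    rw [this]
    simp [EuclideanSpace.single_apply]
  have hyval : ∀ j, y j = Int.fract (x j) := by
    intro j
    rw [hy]
    rw [show (x - ∑ k, (c k : ℝ) • EuclideanSpace.single k (1:ℝ)) j
      = x j - (∑ k, (c k : ℝ) • EuclideanSpace.single k (1:ℝ)) j from rfl]
    rw [hsum j, hc, Int.fract]
  have hymem : y ∈ {x : Ed | ∀ i, x i ∈ Icc (0:ℝ) 1} := by
    intro i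
    rw [hyval i]
    exact ⟨Int.fract_nonneg _, le_of_lt (Int.fract_lt_one _)⟩
  have hxy : y + ∑ k, (c k : ℝ) • EuclideanSpace.single k 1 = x := by
    rw [hy]; abel
  calc f x = f y := by rw [← hxy, periodic_intsum hper c y]
    _ ≤ f x₀ := hmax hymem


lemma secondDeriv_nonneg_of_min {g : ℝ → ℝ} (hg : ContDiff ℝ 2 g)
    (hmin : ∀ t, g 0 ≤ g t) : 0 ≤ deriv (deriv g) 0 := by
  have h := secondDeriv_nonpos_of_max (g := fun t => -g t) hg.neg (fun t => neg_le_neg (hmin t))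
  have e1 : deriv (fun t => -g t) = fun t => -deriv g t := funext fun t => deriv.neg
  rw [e1] at h
  have e2 : deriv (fun t => -deriv g t) 0 = -deriv (deriv g) 0 := deriv.neg
  rw [e2] at h
  linarith

lemma pde_bound {K : ℝ} {V U : Ed → ℝ} (hVK : ∀ x, |V x| ≤ K)
    (hU : ContDiff ℝ 2 U)
    (hUper : ∀ x (k : Fin d), U (x + EuclideanSpace.single k 1) = U x)
    (hPDE : ∀ x, (∑ i, fderiv ℝ
        (fun z => fderiv ℝ U z (EuclideanSpace.single i 1)) x (EuclideanSpace.single i 1))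
      = Real.exp (V x + U x) - 1) :
    ∀ x, |U x| ≤ K := by
  -- upper bound
  obtain ⟨x₀, hx₀⟩ := exists_max_of_periodic hU.continuous hUper
  have hup : ∀ i : Fin d, fderiv ℝ
      (fun z => fderiv ℝ U z (EuclideanSpace.single i 1)) x₀ (EuclideanSpace.single i 1) ≤ 0 := by
    intro i
    rw [← secondDirDeriv_eq hU x₀ (EuclideanSpace.single i 1)]
    exact secondDeriv_nonpos_of_max (line_contDiff hU _ _)
      (fun t => by simpa using hx₀ (x₀ + t • EuclideanSpace.single i 1))
  have hsum0 : Real.exp (V x₀ + U x₀) - 1 ≤ 0 := by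
    rw [← hPDE x₀]; exact Finset.sum_nonpos fun i _ => hup i
  have hUx₀ : U x₀ ≤ K := by
    have : V x₀ + U x₀ ≤ 0 := by
      by_contra hcon; push_neg at hcon
      nlinarith [Real.add_one_le_exp (V x₀ + U x₀)]
    have := (abs_le.1 (hVK x₀)).1
    linarith
  -- lower bound
  obtain ⟨x₁, hx₁⟩ := exists_max_of_periodic (f := fun x => -U x) hU.continuous.neg
    (fun x k => by simp [hUper x k])
  have hx₁' : ∀ x, U x₁ ≤ U x := fun x => by have := hx₁ x; linarith
  have hlo : ∀ i : Fin d, 0 ≤ fderiv ℝ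
      (fun z => fderiv ℝ U z (EuclideanSpace.single i 1)) x₁ (EuclideanSpace.single i 1) := by
    intro i
    rw [← secondDirDeriv_eq hU x₁ (EuclideanSpace.single i 1)]
    exact secondDeriv_nonneg_of_min (line_contDiff hU _ _)
      (fun t => by simpa using hx₁' (x₁ + t • EuclideanSpace.single i 1))
  have hsum1 : 0 ≤ Real.exp (V x₁ + U x₁) - 1 := by
    rw [← hPDE x₁]; exact Finset.sum_nonneg fun i _ => hlo i
  have hUx₁ : -K ≤ U x₁ := by
    have h1 : (0:ℝ) ≤ V x₁ + U x₁ := by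
      by_contra hcon; push_neg at hcon
      have : Real.exp (V x₁ + U x₁) < Real.exp 0 := Real.exp_lt_exp.2 hcon
      rw [Real.exp_zero] at this
      linarith
    have := (abs_le.1 (hVK x₁)).2
    linarith
  intro x
  rw [abs_le]
  exact ⟨le_trans hUx₁ (hx₁' x), le_trans (hx₀ x) hUx₀⟩


noncomputable def psiL : Pn ≃L[ℝ] En := (EuclideanSpace.equiv (Fin (n+1)) ℝ).symm

lemma integral_divergence_zero (F : Fin (n+1) → En → ℝ)
    (hF : ∀ i, ContDiff ℝ 1 (F i))
    (hFper : ∀ i (x : En), F i (x + EuclideanSpace.single i 1) = F i x) :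
    ∫ x in {x : En | ∀ i, x i ∈ Icc (0:ℝ) 1},
      ∑ i, fderiv ℝ (F i) x (EuclideanSpace.single i 1) = 0 := by
  classical
  set ψ : Pn ≃L[ℝ] En := psiL with hψ
  set f : Pn → Pn := fun y i => F i (ψ y) with hf
  set f' : Pn → Pn →L[ℝ] Pn :=
    fun y => ContinuousLinearMap.pi fun i => (fderiv ℝ (F i) (ψ y)).comp (ψ : Pn →L[ℝ] En) with hf'
  have hψsingle : ∀ i : Fin (n+1), ψ (Pi.single i (1:ℝ)) = EuclideanSpace.single i (1:ℝ) := by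
    intro i; rfl
  have hderiv : ∀ y : Pn, HasFDerivAt f (f' y) y := by
    intro y
    rw [hasFDerivAt_pi']
    intro i
    rw [hf', ContinuousLinearMap.proj_pi]
    exact (((hF i).differentiable one_ne_zero (ψ y)).hasFDerivAt.comp y ψ.hasFDerivAt)
  have hdiv : ∀ y : Pn, (∑ i, f' y (Pi.single i 1) i)
      = ∑ i, fderiv ℝ (F i) (ψ y) (EuclideanSpace.single i 1) := by
    intro y
    refine Finset.sum_congr rfl fun i _ => ?_
    rw [hf']
    simp only [ContinuousLinearMap.pi_apply, ContinuousLinearMap.comp_apply,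
      ContinuousLinearMap.coe_coe]
    rw [show (ψ : Pn →L[ℝ] En) (Pi.single i 1) = EuclideanSpace.single i (1:ℝ) from rfl]
  have hcont_dF : ∀ i, Continuous fun y : Pn => fderiv ℝ (F i) (ψ y) (EuclideanSpace.single i 1) :=
    fun i => (((hF i).continuous_fderiv one_ne_zero).comp ψ.continuous).clm_apply continuous_const
  have Hi : IntegrableOn (fun y : Pn => ∑ i, f' y (Pi.single i 1) i) (Icc 0 1) volume := by
    have : Continuous fun y : Pn => ∑ i, f' y (Pi.single i 1) i := by
      have : (fun y : Pn => ∑ i, f' y (Pi.single i 1) i)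
          = fun y => ∑ i, fderiv ℝ (F i) (ψ y) (EuclideanSpace.single i 1) := funext hdiv
      rw [this]
      exact continuous_finset_sum _ fun i _ => hcont_dF i
    exact this.continuousOn.integrableOn_compact isCompact_Icc
  have hdivthm := integral_divergence_of_hasFDerivAt_off_countable
    (0 : Pn) 1 zero_le_one f f' ∅ countable_empty
    (by
      apply Continuous.continuousOn
      exact continuous_pi fun i => ((hF i).continuous).comp ψ.continuous)
    (fun x _ => hderiv x) Hi
  -- faces cancel
  have hface : ∀ i : Fin (n+1),
      ((∫ x in Icc ((0:Pn) ∘ i.succAbove) ((1:Pn) ∘ i.succAbove),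
          f (Fin.insertNth i ((1:Pn) i) x) i)
        - ∫ x in Icc ((0:Pn) ∘ i.succAbove) ((1:Pn) ∘ i.succAbove),
          f (Fin.insertNth i ((0:Pn) i) x) i)
      = 0 := by
    intro i
    have hpt : ∀ x : Fin n → ℝ,
        f (Fin.insertNth i ((1:Pn) i) x) i = f (Fin.insertNth i ((0:Pn) i) x) i := by
      intro x
      have e : (Fin.insertNth i ((1:Pn) i) x : Pn)
          = (Fin.insertNth i ((0:Pn) i) x : Pn) + Pi.single i (1:ℝ) := by
        funext j
        refine Fin.succAboveCases i ?_ ?_ j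
        · simp
        · intro k; simp [Pi.single_eq_of_ne (Fin.succAbove_ne i k)]
      show F i (ψ (Fin.insertNth i ((1:Pn) i) x)) = F i (ψ (Fin.insertNth i ((0:Pn) i) x))
      rw [e, map_add, show ψ (Pi.single i (1:ℝ)) = EuclideanSpace.single i (1:ℝ) from rfl]
      exact hFper i _
    simp only [hpt, sub_self]
  have hzero : ∫ y in Icc (0:Pn) 1, ∑ i, f' y (Pi.single i 1) i = 0 := by
    rw [hdivthm]; exact Finset.sum_eq_zero fun i _ => hface i
  -- transfer to En
  have hmp : MeasurePreserving (⇑((MeasurableEquiv.toLp 2 (Fin (n+1) → ℝ)).symm).symm)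
      volume volume := (EuclideanSpace.volume_preserving_symm_measurableEquiv_toLp (Fin (n+1))).symm
  have htrans := hmp.setIntegral_preimage_emb
    ((MeasurableEquiv.toLp 2 (Fin (n+1) → ℝ)).symm).symm.measurableEmbedding
    (fun x => ∑ i, fderiv ℝ (F i) x (EuclideanSpace.single i 1))
    {x : En | ∀ i, x i ∈ Icc (0:ℝ) 1}
  have hpre : (⇑((MeasurableEquiv.toLp 2 (Fin (n+1) → ℝ)).symm).symm) ⁻¹'
      {x : En | ∀ i, x i ∈ Icc (0:ℝ) 1} = Icc (0:Pn) 1 := by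
    ext y
    simp only [mem_preimage, mem_setOf_eq, Set.mem_Icc, Pi.le_def]
    constructor
    · intro h; exact ⟨fun i => (h i).1, fun i => (h i).2⟩
    · intro h i; exact ⟨h.1 i, h.2 i⟩
  rw [← htrans, hpre]
  have : ∀ y : Pn, ((MeasurableEquiv.toLp 2 (Fin (n+1) → ℝ)).symm).symm y = ψ y := fun y => rfl
  calc (∫ y in Icc (0:Pn) 1, ∑ i,
        fderiv ℝ (F i) (((MeasurableEquiv.toLp 2 (Fin (n+1) → ℝ)).symm).symm y) (EuclideanSpace.single i 1))
      = ∫ y in Icc (0:Pn) 1, ∑ i, f' y (Pi.single i 1) i := by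
        refine setIntegral_congr_fun measurableSet_Icc fun y _ => ?_
        rw [this y, ← hdiv y]
    _ = 0 := hzero


lemma measurableSet_IccBox : MeasurableSet {x : En | ∀ i, x i ∈ Icc (0:ℝ) 1} := by
  have h : {x : En | ∀ i, x i ∈ Icc (0:ℝ) 1}
      = ⇑((MeasurableEquiv.toLp 2 (Fin (n+1) → ℝ)).symm) ⁻¹' (Icc (0:Pn) 1) := by
    ext x
    simp only [mem_preimage, mem_setOf_eq, Set.mem_Icc, Pi.le_def]
    exact ⟨fun h => ⟨fun i => (h i).1, fun i => (h i).2⟩, fun h i => ⟨h.1 i, h.2 i⟩⟩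
  rw [h]
  exact ((MeasurableEquiv.toLp 2 (Fin (n+1) → ℝ)).symm).measurable measurableSet_Icc

lemma measurableSet_IcoBox : MeasurableSet {x : En | ∀ i, x i ∈ Ico (0:ℝ) 1} := by
  have h : {x : En | ∀ i, x i ∈ Ico (0:ℝ) 1}
      = ⇑((MeasurableEquiv.toLp 2 (Fin (n+1) → ℝ)).symm) ⁻¹' (univ.pi fun _ => Ico (0:ℝ) 1) := by
    ext x
    simp only [mem_preimage, mem_setOf_eq, Set.mem_pi, mem_univ, forall_true_left]
    exact Iff.rfl
  rw [h]
  exact ((MeasurableEquiv.toLp 2 (Fin (n+1) → ℝ)).symm).measurable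
    (MeasurableSet.univ_pi fun _ => measurableSet_Ico)

lemma icoBox_ae_iccBox :
    {x : En | ∀ i, x i ∈ Ico (0:ℝ) 1} =ᶠ[ae (volume : Measure En)]
      {x : En | ∀ i, x i ∈ Icc (0:ℝ) 1} := by
  rw [MeasureTheory.ae_eq_set]
  constructor
  · have : {x : En | ∀ i, x i ∈ Ico (0:ℝ) 1} \ {x : En | ∀ i, x i ∈ Icc (0:ℝ) 1} = ∅ := by
      rw [diff_eq_empty]
      intro x hx i
      exact Ico_subset_Icc_self (hx i)
    rw [this, measure_empty]
  · have hmp : MeasurePreserving (⇑((MeasurableEquiv.toLp 2 (Fin (n+1) → ℝ)).symm).symm)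
        (volume : Measure Pn) volume :=
      (EuclideanSpace.volume_preserving_symm_measurableEquiv_toLp (Fin (n+1))).symm
    have hpre : (⇑((MeasurableEquiv.toLp 2 (Fin (n+1) → ℝ)).symm).symm) ⁻¹'
        ({x : En | ∀ i, x i ∈ Icc (0:ℝ) 1} \ {x : En | ∀ i, x i ∈ Ico (0:ℝ) 1})
        = Icc (0:Pn) 1 \ (univ.pi fun _ => Ico (0:ℝ) 1) := by
      ext y
      simp only [preimage_diff, mem_diff, mem_preimage, mem_setOf_eq, Set.mem_Icc, Pi.le_def,
        Set.mem_pi, mem_univ, forall_true_left]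
      constructor
      · rintro ⟨h1, h2⟩
        exact ⟨⟨fun i => (h1 i).1, fun i => (h1 i).2⟩, fun h => h2 fun i => h i⟩
      · rintro ⟨⟨h1, h2⟩, h3⟩
        exact ⟨fun i => ⟨h1 i, h2 i⟩, fun h => h3 fun i => h i⟩
    have hsub : (univ.pi fun _ : Fin (n+1) => Ico (0:ℝ) 1) ⊆ Icc (0:Pn) 1 := by
      intro y hy
      rw [Set.mem_Icc]
      exact ⟨fun i => (hy i trivial).1, fun i => le_of_lt (hy i trivial).2⟩
    have hIcc : (volume : Measure Pn) (Icc (0:Pn) 1) = 1 := by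
      rw [Real.volume_Icc_pi]
      simp
    have hIco : (volume : Measure Pn) (univ.pi fun _ : Fin (n+1) => Ico (0:ℝ) 1) = 1 := by
      rw [volume_pi_pi]
      simp [Real.volume_Ico]
    have hdiff : (volume : Measure Pn) (Icc (0:Pn) 1 \ (univ.pi fun _ => Ico (0:ℝ) 1)) = 0 := by
      rw [measure_diff hsub
        ((MeasurableSet.univ_pi fun _ => measurableSet_Ico).nullMeasurableSet)
        (by rw [hIco]; exact ENNReal.one_ne_top), hIcc, hIco, tsub_self]
    calc (volume : Measure En) _ = (volume : Measure Pn) _ :=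
          (hmp.measure_preimage ((measurableSet_IccBox.diff measurableSet_IcoBox)).nullMeasurableSet).symm
      _ = 0 := by rw [hpre]; exact hdiff

-- pointwise algebra
lemma exp_lower {a b m : ℝ} (hm : m ≤ b) (hab : b ≤ a) :
    Real.exp m * (a - b) ≤ Real.exp a - Real.exp b := by
  have h1 := Real.add_one_le_exp (a - b)
  have h3 : Real.exp b * Real.exp (a - b) = Real.exp a := by
    rw [← Real.exp_add]; ring_nf
  have h4 : Real.exp m ≤ Real.exp b := Real.exp_le_exp.2 hm
  nlinarith [Real.exp_pos b, sub_nonneg.2 hab]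

lemma exp_upper {a b M : ℝ} (hab : b ≤ a) (hM : a ≤ M) :
    Real.exp a - Real.exp b ≤ Real.exp M * (a - b) := by
  have h1 := Real.add_one_le_exp (b - a)
  have h3 : Real.exp a * Real.exp (b - a) = Real.exp b := by
    rw [← Real.exp_add]; ring_nf
  have h4 : Real.exp a ≤ Real.exp M := Real.exp_le_exp.2 hM
  nlinarith [Real.exp_pos a, sub_nonneg.2 hab]

lemma key_ineq_aux {K a b δ : ℝ} (hK : 0 ≤ K) (ha : |a| ≤ 2*K) (hb : |b| ≤ 2*K) (hab : b ≤ a) :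
    -(((a - b) - δ) * (Real.exp a - Real.exp b)) ≤ Real.exp (6*K) * δ^2 := by
  set P := Real.exp (2*K) with hP
  have hP1 : 1 ≤ P := by
    rw [hP, show (1:ℝ) = Real.exp 0 from (Real.exp_zero).symm]
    exact Real.exp_le_exp.2 (by linarith)
  have hP0 : 0 < P := lt_of_lt_of_le one_pos hP1
  have hPinv : Real.exp (-(2*K)) * P = 1 := by
    rw [hP, ← Real.exp_add]; simp
  have h6 : Real.exp (6*K) = P^3 := by
    rw [hP, ← Real.exp_nat_mul]; norm_num; ring_nf
  have h1 : Real.exp (-(2*K)) * (a - b) ≤ Real.exp a - Real.exp b :=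
    exp_lower (neg_le_of_abs_le hb) hab
  have h2 : Real.exp a - Real.exp b ≤ P * (a - b) :=
    exp_upper hab (le_of_abs_le ha)
  set E1 := Real.exp a - Real.exp b with hE1def
  have hE1 : 0 ≤ E1 := by
    rw [hE1def, sub_nonneg]; exact Real.exp_le_exp.2 hab
  set s := a - b with hs
  have hs0 : 0 ≤ s := sub_nonneg.2 hab
  have h1' : s ≤ P * E1 := by nlinarith
  rw [h6]
  rcases le_total 0 δ with hδ | hδ
  · have hA : (P*δ)*E1 ≤ (P*δ)*(P*s) := mul_le_mul_of_nonneg_left h2 (mul_nonneg hP0.le hδ)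
    have hB : s*s ≤ (P*E1)*s := mul_le_mul_of_nonneg_right h1' hs0
    have hC : (0:ℝ) ≤ (P^2*δ)*s := mul_nonneg (mul_nonneg (pow_nonneg hP0.le 2) hδ) hs0
    have hmain : P * (-((s - δ) * E1)) ≤ P * (P^3*δ^2) := by
      nlinarith [sq_nonneg (s - P^2*δ)]
    exact (mul_le_mul_iff_right₀ hP0).1 hmain
  · nlinarith [mul_nonneg hs0 hE1, mul_nonneg (neg_nonneg.2 hδ) hE1,
      mul_nonneg (mul_nonneg hP0.le (mul_nonneg hP0.le hP0.le)) (sq_nonneg δ)]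

lemma key_ineq {K a b δ : ℝ} (hK : 0 ≤ K) (ha : |a| ≤ 2*K) (hb : |b| ≤ 2*K) :
    -(((a - b) - δ) * (Real.exp a - Real.exp b)) ≤ Real.exp (6*K) * δ^2 := by
  rcases le_total b a with hab | hab
  · exact key_ineq_aux hK ha hb hab
  · have := key_ineq_aux hK hb ha hab (δ := -δ)
    have heq : -(((b - a) - (-δ)) * (Real.exp b - Real.exp a))
        = -(((a - b) - δ) * (Real.exp a - Real.exp b)) := by ring
    rw [heq] at this
    simpa using this


lemma fderiv_translate {f : Ed → ℝ} (hf : Differentiable ℝ f) {c : Ed}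
    (h : ∀ x, f (x + c) = f x) (x : Ed) : fderiv ℝ f (x + c) = fderiv ℝ f x := by
  have h1 : HasFDerivAt (fun z : Ed => f (z + c)) (fderiv ℝ f (x + c)) x := by
    have := (hf (x + c)).hasFDerivAt.comp x ((hasFDerivAt_id x).add_const c)
    exact this
  have h2 : (fun z : Ed => f (z + c)) = f := funext h
  rw [h2] at h1
  exact h1.fderiv.symm

end VPMEAux

/-- Stability of the nonlinear part of the electric field in the VPME system, on the torus
(modelled by ℤ^d-periodic functions on ℝ^d, integrating over the unit box): if
ΔU_i = e^{V_i + U_i} − 1 with ‖V_i‖_∞ ≤ K, then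
‖∇U₁ − ∇U₂‖²_{L²} ≤ e^{C(K)} ‖V₁ − V₂‖²_{L²} with C(K) depending only on K and d. -/
theorem vpme_field_stability (d : ℕ) (hd : 1 ≤ d) (K : ℝ) (hK : 0 ≤ K) :
    ∃ C : ℝ, ∀ V₁ V₂ U₁ U₂ : EuclideanSpace ℝ (Fin d) → ℝ,
      Continuous V₁ → Continuous V₂ →
      (∀ x, |V₁ x| ≤ K) → (∀ x, |V₂ x| ≤ K) →
      (∀ x (k : Fin d), V₁ (x + EuclideanSpace.single k 1) = V₁ x) →
      (∀ x (k : Fin d), V₂ (x + EuclideanSpace.single k 1) = V₂ x) →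
      ContDiff ℝ 2 U₁ → ContDiff ℝ 2 U₂ →
      (∀ x (k : Fin d), U₁ (x + EuclideanSpace.single k 1) = U₁ x) →
      (∀ x (k : Fin d), U₂ (x + EuclideanSpace.single k 1) = U₂ x) →
      (∀ x, (∑ i, fderiv ℝ
          (fun z => fderiv ℝ U₁ z (EuclideanSpace.single i 1)) x (EuclideanSpace.single i 1))
        = Real.exp (V₁ x + U₁ x) - 1) →
      (∀ x, (∑ i, fderiv ℝ
          (fun z => fderiv ℝ U₂ z (EuclideanSpace.single i 1)) x (EuclideanSpace.single i 1))
        = Real.exp (V₂ x + U₂ x) - 1) →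
      (∫ x in {x : EuclideanSpace ℝ (Fin d) | ∀ i, x i ∈ Set.Ico (0:ℝ) 1},
          ∑ i, (fderiv ℝ U₁ x (EuclideanSpace.single i 1)
            - fderiv ℝ U₂ x (EuclideanSpace.single i 1)) ^ 2)
        ≤ Real.exp C *
          ∫ x in {x : EuclideanSpace ℝ (Fin d) | ∀ i, x i ∈ Set.Ico (0:ℝ) 1},
            (V₁ x - V₂ x) ^ 2 := by
  obtain ⟨n, rfl⟩ : ∃ n, d = n + 1 := ⟨d - 1, (Nat.succ_pred_eq_of_pos hd).symm⟩
  refine ⟨6 * K, ?_⟩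
  intro V₁ V₂ U₁ U₂ hV₁c hV₂c hV₁K hV₂K hV₁p hV₂p hU₁ hU₂ hU₁p hU₂p hPDE₁ hPDE₂
  have hU₁K : ∀ x, |U₁ x| ≤ K := pde_bound hV₁K hU₁ hU₁p hPDE₁
  have hU₂K : ∀ x, |U₂ x| ≤ K := pde_bound hV₂K hU₂ hU₂p hPDE₂
  set W : EuclideanSpace ℝ (Fin (n+1)) → ℝ := fun x => U₁ x - U₂ x with hWdef
  have hW : ContDiff ℝ 2 W := hU₁.sub hU₂
  have hWd : Differentiable ℝ W := hW.differentiable (by norm_num)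
  set g : Fin (n+1) → EuclideanSpace ℝ (Fin (n+1)) → ℝ :=
    fun i x => fderiv ℝ W x (EuclideanSpace.single i 1) with hgdef
  have hg : ∀ i, ContDiff ℝ 1 (g i) :=
    fun i => (hW.fderiv_right (m := 1) (by norm_num)).clm_apply contDiff_const
  have hWper : ∀ (x : EuclideanSpace ℝ (Fin (n+1))) k, W (x + EuclideanSpace.single k 1) = W x :=
    fun x k => by rw [hWdef]; simp only [hU₁p x k, hU₂p x k]
  have hgper : ∀ i (x : EuclideanSpace ℝ (Fin (n+1))),
      g i (x + EuclideanSpace.single i 1) = g i x := by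
    intro i x
    rw [hgdef]
    simp only
    rw [fderiv_translate hWd (fun y => hWper y i) x]
  set F : Fin (n+1) → EuclideanSpace ℝ (Fin (n+1)) → ℝ := fun i x => W x * g i x with hFdef
  have hF : ∀ i, ContDiff ℝ 1 (F i) := fun i => (hW.of_le (by norm_num)).mul (hg i)
  have hFper : ∀ i (x : EuclideanSpace ℝ (Fin (n+1))),
      F i (x + EuclideanSpace.single i 1) = F i x := by
    intro i x
    rw [hFdef]
    simp only
    rw [hWper x i, hgper i x]
  have ibp := integral_divergence_zero F hF hFper
  -- pointwise computation of the divergence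
  have hdivpt : ∀ x : EuclideanSpace ℝ (Fin (n+1)),
      (∑ i, fderiv ℝ (F i) x (EuclideanSpace.single i 1))
        = (∑ i, (g i x)^2)
          + W x * (Real.exp (V₁ x + U₁ x) - Real.exp (V₂ x + U₂ x)) := by
    intro x
    have hterm : ∀ i, fderiv ℝ (F i) x (EuclideanSpace.single i 1)
        = (g i x)^2 + W x * fderiv ℝ (g i) x (EuclideanSpace.single i 1) := by
      intro i
      have hd1 : DifferentiableAt ℝ W x := hWd x
      have hd2 : DifferentiableAt ℝ (g i) x := ((hg i).differentiable one_ne_zero) x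
      have hmul := fderiv_fun_mul hd1 hd2
      calc fderiv ℝ (F i) x (EuclideanSpace.single i 1)
          = (W x • fderiv ℝ (g i) x + g i x • fderiv ℝ W x) (EuclideanSpace.single i 1) := by
            rw [hFdef]; rw [hmul]
        _ = W x * fderiv ℝ (g i) x (EuclideanSpace.single i 1)
            + g i x * fderiv ℝ W x (EuclideanSpace.single i 1) := by
            simp [ContinuousLinearMap.add_apply, ContinuousLinearMap.smul_apply]
        _ = (g i x)^2 + W x * fderiv ℝ (g i) x (EuclideanSpace.single i 1) := by
            rw [hgdef]; ring
    rw [Finset.sum_congr rfl fun i _ => hterm i, Finset.sum_add_distrib, ← Finset.mul_sum]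
    congr 1
    have hgsplit : ∀ i, fderiv ℝ (g i) x (EuclideanSpace.single i 1)
        = fderiv ℝ (fun z => fderiv ℝ U₁ z (EuclideanSpace.single i 1)) x (EuclideanSpace.single i 1)
          - fderiv ℝ (fun z => fderiv ℝ U₂ z (EuclideanSpace.single i 1)) x (EuclideanSpace.single i 1) := by
      intro i
      have hgeq : g i = fun z => fderiv ℝ U₁ z (EuclideanSpace.single i 1)
          - fderiv ℝ U₂ z (EuclideanSpace.single i 1) := by
        funext z
        rw [hgdef]
        simp only
        rw [hWdef, fderiv_fun_sub ((hU₁.differentiable (by norm_num)) z)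
          ((hU₂.differentiable (by norm_num)) z)]
        rfl
      have hdU₁ : DifferentiableAt ℝ (fun z => fderiv ℝ U₁ z (EuclideanSpace.single i 1)) x :=
        (((hU₁.fderiv_right (m := 1) (by norm_num)).clm_apply contDiff_const).differentiable one_ne_zero) x
      have hdU₂ : DifferentiableAt ℝ (fun z => fderiv ℝ U₂ z (EuclideanSpace.single i 1)) x :=
        (((hU₂.fderiv_right (m := 1) (by norm_num)).clm_apply contDiff_const).differentiable one_ne_zero) x
      rw [hgeq, fderiv_fun_sub hdU₁ hdU₂]
      rfl
    rw [Finset.sum_congr rfl fun i _ => hgsplit i, Finset.sum_sub_distrib, hPDE₁ x, hPDE₂ x]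
    ring
  -- integrability
  have hPcont : Continuous fun x : EuclideanSpace ℝ (Fin (n+1)) => ∑ i, (g i x)^2 :=
    continuous_finset_sum _ fun i _ => ((hg i).continuous).pow 2
  have hQcont : Continuous fun x : EuclideanSpace ℝ (Fin (n+1)) =>
      W x * (Real.exp (V₁ x + U₁ x) - Real.exp (V₂ x + U₂ x)) :=
    (hW.continuous).mul (((hV₁c.add hU₁.continuous).rexp).sub ((hV₂c.add hU₂.continuous).rexp))
  have hRcont : Continuous fun x : EuclideanSpace ℝ (Fin (n+1)) =>
      Real.exp (6*K) * (V₁ x - V₂ x)^2 :=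
    continuous_const.mul ((hV₁c.sub hV₂c).pow 2)
  have hVcont : Continuous fun x : EuclideanSpace ℝ (Fin (n+1)) => (V₁ x - V₂ x)^2 :=
    (hV₁c.sub hV₂c).pow 2
  have hPint : IntegrableOn (fun x : EuclideanSpace ℝ (Fin (n+1)) => ∑ i, (g i x)^2)
      {x : EuclideanSpace ℝ (Fin (n+1)) | ∀ i, x i ∈ Icc (0:ℝ) 1} volume :=
    hPcont.continuousOn.integrableOn_compact isCompact_IccBox
  have hQint : IntegrableOn (fun x : EuclideanSpace ℝ (Fin (n+1)) =>
      W x * (Real.exp (V₁ x + U₁ x) - Real.exp (V₂ x + U₂ x)))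
      {x : EuclideanSpace ℝ (Fin (n+1)) | ∀ i, x i ∈ Icc (0:ℝ) 1} volume :=
    hQcont.continuousOn.integrableOn_compact isCompact_IccBox
  have hRint : IntegrableOn (fun x : EuclideanSpace ℝ (Fin (n+1)) =>
      Real.exp (6*K) * (V₁ x - V₂ x)^2)
      {x : EuclideanSpace ℝ (Fin (n+1)) | ∀ i, x i ∈ Icc (0:ℝ) 1} volume :=
    hRcont.continuousOn.integrableOn_compact isCompact_IccBox
  -- ∫ P = - ∫ Q over Icc box
  have hsplit : (∫ x in {x : EuclideanSpace ℝ (Fin (n+1)) | ∀ i, x i ∈ Icc (0:ℝ) 1},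
        ∑ i, (g i x)^2)
      = - ∫ x in {x : EuclideanSpace ℝ (Fin (n+1)) | ∀ i, x i ∈ Icc (0:ℝ) 1},
        W x * (Real.exp (V₁ x + U₁ x) - Real.exp (V₂ x + U₂ x)) := by
    have h0 : (∫ x in {x : EuclideanSpace ℝ (Fin (n+1)) | ∀ i, x i ∈ Icc (0:ℝ) 1},
        ((∑ i, (g i x)^2)
          + W x * (Real.exp (V₁ x + U₁ x) - Real.exp (V₂ x + U₂ x)))) = 0 := by
      rw [← setIntegral_congr_fun measurableSet_IccBox fun x _ => hdivpt x]
      exact ibp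
    rw [integral_add hPint hQint] at h0
    linarith
  -- pointwise bound of -Q
  have hptineq : ∀ x : EuclideanSpace ℝ (Fin (n+1)),
      -(W x * (Real.exp (V₁ x + U₁ x) - Real.exp (V₂ x + U₂ x)))
        ≤ Real.exp (6*K) * (V₁ x - V₂ x)^2 := by
    intro x
    have ha : |V₁ x + U₁ x| ≤ 2*K := by
      have := abs_add_le (V₁ x) (U₁ x)
      have h1 := hV₁K x; have h2 := hU₁K x; linarith
    have hb : |V₂ x + U₂ x| ≤ 2*K := by
      have := abs_add_le (V₂ x) (U₂ x)
      have h1 := hV₂K x; have h2 := hU₂K x; linarith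
    have := key_ineq (a := V₁ x + U₁ x) (b := V₂ x + U₂ x) (δ := V₁ x - V₂ x) hK ha hb
    have hWeq : W x = ((V₁ x + U₁ x) - (V₂ x + U₂ x)) - (V₁ x - V₂ x) := by
      rw [hWdef]; ring
    rw [hWeq]
    exact this
  -- final chain
  have hLHS : (∫ x in {x : EuclideanSpace ℝ (Fin (n+1)) | ∀ i, x i ∈ Set.Ico (0:ℝ) 1},
        ∑ i, (fderiv ℝ U₁ x (EuclideanSpace.single i 1)
          - fderiv ℝ U₂ x (EuclideanSpace.single i 1)) ^ 2)
      = ∫ x in {x : EuclideanSpace ℝ (Fin (n+1)) | ∀ i, x i ∈ Icc (0:ℝ) 1},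
        ∑ i, (g i x)^2 := by
    rw [setIntegral_congr_set icoBox_ae_iccBox]
    refine setIntegral_congr_fun measurableSet_IccBox fun x _ => ?_
    refine Finset.sum_congr rfl fun i _ => ?_
    rw [hgdef]
    simp only
    rw [hWdef, fderiv_fun_sub ((hU₁.differentiable (by norm_num)) x)
      ((hU₂.differentiable (by norm_num)) x)]
    rfl
  have hRHS : (∫ x in {x : EuclideanSpace ℝ (Fin (n+1)) | ∀ i, x i ∈ Set.Ico (0:ℝ) 1},
        (V₁ x - V₂ x) ^ 2)
      = ∫ x in {x : EuclideanSpace ℝ (Fin (n+1)) | ∀ i, x i ∈ Icc (0:ℝ) 1},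
        (V₁ x - V₂ x) ^ 2 := setIntegral_congr_set icoBox_ae_iccBox
  rw [hLHS, hRHS, hsplit, ← integral_const_mul]
  rw [← MeasureTheory.integral_neg]
  exact setIntegral_mono_on hQint.neg hRint measurableSet_IccBox fun x _ => hptineq x
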